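/- For every natural number n ≥ 4, the infinite product ∏_{k≥1} (1 - 1/2^(k·n)) is at least 1 - 1/n. -/

import Mathlib

open Finset in
lemma my_prod_one_sub_ge (s : Finset ℕ) (a : ℕ → ℝ) (h0 : ∀ i, 0 ≤ a i)
    (h1 : ∀ i, a i ≤ 1) : (1 : ℝ) - ∑ i ∈ s, a i ≤ ∏ i ∈ s, (1 - a i) := by
  induction s using Finset.cons_induction with
  | empty => simp
  | cons j s hj ih =>
    rw [Finset.prod_cons, Finset.sum_cons]
    have hs0 : (0:ℝ) ≤ ∑ i ∈ s, a i := Finset.sum_nonneg fun i _ => h0 i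
    nlinarith [h0 j, h1 j, ih]

theorem stmt_3 (n : ℕ) (hn : 4 ≤ n) :
    (∏' k : ℕ, (1 - 1 / 2 ^ ((k + 1) * n) : ℝ)) ≥ 1 - 1 / (n : ℝ) := by
  set a : ℕ → ℝ := fun k => 1 / 2 ^ ((k + 1) * n) with ha
  have hx : ∀ k, a k = ((1:ℝ)/2^n) ^ (k+1) := by
    intro k
    simp [ha, ← pow_mul, mul_comm, div_pow, one_div]
  have hxlt : (1:ℝ)/2^n < 1 := by
    rw [div_lt_one (by positivity)]
    exact one_lt_pow₀ (by norm_num) (by omega)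
  have hx0 : (0:ℝ) ≤ 1/2^n := by positivity
  have h0 : ∀ k, 0 ≤ a k := fun k => by rw [hx]; positivity
  have h1 : ∀ k, a k ≤ 1 := fun k => by
    rw [hx]; exact pow_le_one₀ hx0 hxlt.le
  have hpos : ∀ k, 0 < 1 - a k := fun k => by
    rw [hx]
    have h : ((1:ℝ)/2^n)^(k+1) < 1 := pow_lt_one₀ hx0 hxlt (by omega)
    linarith
  have hsum : Summable a := by
    apply Summable.congr (((summable_geometric_of_lt_one hx0 hxlt)).mul_left ((1:ℝ)/2^n))
    intro k
    rw [hx, pow_succ]; ring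
  have htsum : tsum a ≤ 1 / (n : ℝ) := by
    have hgeo : tsum a = (1/2^n) / (1 - 1/2^n) := by
      have := tsum_geometric_of_lt_one hx0 hxlt
      calc tsum a = ∑' k, (1/2^n) * ((1:ℝ)/2^n)^k :=
            tsum_congr fun k => by show a k = _; rw [hx, pow_succ]; ring
        _ = (1/2^n) * ∑' k, ((1:ℝ)/2^n)^k := tsum_mul_left
        _ = (1/2^n) / (1 - 1/2^n) := by rw [this]; ring
    rw [hgeo, div_le_div_iff₀ (by linarith) (by positivity)]
    have h2n : (n:ℝ) + 1 ≤ 2^n := by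
      have : n + 1 ≤ 2^n := Nat.succ_le_of_lt (Nat.lt_two_pow_self (n := n))
      exact_mod_cast this
    have h2 : (0:ℝ) < (2:ℝ)^n := by positivity
    have hinv : (1:ℝ)/2^n * 2^n = 1 := by field_simp
    nlinarith
  -- multipliability
  have hlog : Summable fun k => Real.log (1 - a k) := by
    apply Summable.of_norm_bounded (hsum.mul_left 2)
    intro k
    rw [Real.norm_eq_abs, abs_le]
    constructor
    · have h12 : a k ≤ 1/2 := by
        rw [hx]
        calc ((1:ℝ)/2^n)^(k+1) ≤ (1/2^n)^1 :=
              pow_le_pow_of_le_one hx0 hxlt.le (by omega)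
          _ ≤ 1/2 := by
              rw [pow_one]
              exact one_div_le_one_div_of_le two_pos
                (le_self_pow₀ one_le_two (by omega))
      have := Real.log_le_sub_one_of_pos (x := (1 - a k)⁻¹) (inv_pos.mpr (hpos k))
      rw [Real.log_inv] at this
      have : -Real.log (1 - a k) ≤ (1 - a k)⁻¹ - 1 := this
      have hinv : (1 - a k)⁻¹ - 1 = a k / (1 - a k) := by
        rw [eq_div_iff (hpos k).ne', sub_mul, inv_mul_cancel₀ (hpos k).ne']
        ring
      rw [hinv] at this
      have : a k / (1 - a k) ≤ 2 * a k := by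
        rw [div_le_iff₀ (hpos k)]
        nlinarith [h0 k]
      linarith
    · have := Real.log_le_sub_one_of_pos (hpos k)
      nlinarith [h0 k]
  have hmult : Multipliable fun k => (1 - a k : ℝ) :=
    Real.multipliable_of_summable_log hpos hlog
  have hprod := hmult.hasProd
  refine ge_of_tendsto hprod (Filter.Eventually.of_forall fun s => ?_)
  calc (1:ℝ) - 1/n ≤ 1 - ∑ i ∈ s, a i := by
        have : ∑ i ∈ s, a i ≤ tsum a := Summable.sum_le_tsum s (fun i _ => h0 i) hsum
        linarith
    _ ≤ ∏ i ∈ s, (1 - a i) := my_prod_one_sub_ge s a h0 h1
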